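/- Let Λ ⊂ ℝ^k (k ≥ 1) be a lattice, i.e. a discrete subgroup whose real span is all of ℝ^k, and let T = ℝ^k/Λ be the flat torus equipped with the quotient metric dist(x̄, ȳ) = inf_{λ ∈ Λ} ‖x − y − λ‖. For every v ∈ ℝ^k, every p ∈ T, and every n ∈ ℕ, if the set X = {p + i·v̄ : i = 0, ..., n} has at least two elements (where v̄ is the image of v in T), then |NND(X)| ≤ 3^k + 1. -/

import Mathlib

open MeasureTheory Metric
open scoped ENNReal RealInnerProductSpace

local notation "E'" k => EuclideanSpace ℝ (Fin k)

lemma aux_pack (k : ℕ) (hk : 1 ≤ k) (s : Finset (EuclideanSpace ℝ (Fin k)))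
    (hnorm : ∀ x ∈ s, ‖x‖ ≤ 1)
    (hsep : ∀ x ∈ s, ∀ y ∈ s, x ≠ y → 1 < dist x y) :
    s.card ≤ 3 ^ k := by
  
  haveI : Nontrivial (EuclideanSpace ℝ (Fin k)) := by
    apply Module.nontrivial_of_finrank_pos (R := ℝ)
    rw [finrank_euclideanSpace_fin]; omega
  have hdisj : (s : Set (EuclideanSpace ℝ (Fin k))).PairwiseDisjoint (fun x => ball x 2⁻¹) := by
    intro x hx y hy hxy
    apply ball_disjoint_ball
    have := hsep x hx y hy hxy
    linarith
  have hsum : (volume (⋃ x ∈ s, ball x 2⁻¹)) = ∑ x ∈ s, volume (ball x 2⁻¹) :=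
    measure_biUnion_finset hdisj (fun x _ => measurableSet_ball)
  have hsub : (⋃ x ∈ s, ball x 2⁻¹) ⊆ ball (0 : EuclideanSpace ℝ (Fin k)) (3/2) := by
    intro z hz
    simp only [Set.mem_iUnion, mem_ball] at hz ⊢
    obtain ⟨x, hx, hzx⟩ := hz
    have := hnorm x hx
    calc dist z 0 ≤ dist z x + dist x 0 := dist_triangle _ _ _
      _ < 3/2 := by rw [dist_zero_right]; linarith
  have hball : ∀ x : EuclideanSpace ℝ (Fin k), volume (ball x (2⁻¹:ℝ)) = ENNReal.ofReal ((2⁻¹:ℝ) ^ k) * volume (ball (0 : EuclideanSpace ℝ (Fin k)) 1) := by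
    intro x
    rw [Measure.addHaar_ball volume x (by norm_num : (0:ℝ) ≤ 2⁻¹), finrank_euclideanSpace_fin]
  have hb2 : volume (ball (0 : EuclideanSpace ℝ (Fin k)) (3/2 : ℝ)) = ENNReal.ofReal ((3/2:ℝ) ^ k) * volume (ball (0 : EuclideanSpace ℝ (Fin k)) 1) := by
    rw [Measure.addHaar_ball volume _ (by norm_num : (0:ℝ) ≤ 3/2), finrank_euclideanSpace_fin]
  have hineq : (s.card : ℝ≥0∞) * (ENNReal.ofReal ((2⁻¹:ℝ) ^ k) * volume (ball (0 : EuclideanSpace ℝ (Fin k)) 1))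
      ≤ ENNReal.ofReal ((3/2:ℝ) ^ k) * volume (ball (0 : EuclideanSpace ℝ (Fin k)) 1) := by
    rw [← hb2]
    calc (s.card : ℝ≥0∞) * (ENNReal.ofReal ((2⁻¹:ℝ) ^ k) * volume (ball (0 : EuclideanSpace ℝ (Fin k)) 1))
        = ∑ x ∈ s, volume (ball x 2⁻¹) := by
          rw [Finset.sum_congr rfl (fun x _ => hball x), Finset.sum_const, nsmul_eq_mul]
      _ = volume (⋃ x ∈ s, ball x 2⁻¹) := hsum.symm
      _ ≤ volume (ball (0 : EuclideanSpace ℝ (Fin k)) (3/2)) := measure_mono hsub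
  have hc0 : volume (ball (0 : EuclideanSpace ℝ (Fin k)) 1) ≠ 0 := (measure_ball_pos volume _ one_pos).ne'
  have hctop : volume (ball (0 : EuclideanSpace ℝ (Fin k)) 1) ≠ ⊤ := measure_ball_lt_top.ne
  have hsplit : ENNReal.ofReal ((3/2:ℝ) ^ k) = (3^k : ℕ) * ENNReal.ofReal ((2⁻¹:ℝ) ^ k) := by
    rw [← ENNReal.ofReal_natCast, ← ENNReal.ofReal_mul (by positivity)]
    congr 1
    push_cast
    rw [← mul_pow]
    norm_num
  rw [hsplit, mul_assoc] at hineq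
  have hx0 : (ENNReal.ofReal ((2⁻¹:ℝ) ^ k) * volume (ball (0 : EuclideanSpace ℝ (Fin k)) 1)) ≠ 0 := by
    apply mul_ne_zero _ hc0
    rw [← pos_iff_ne_zero, ENNReal.ofReal_pos]
    positivity
  have hxtop : (ENNReal.ofReal ((2⁻¹:ℝ) ^ k) * volume (ball (0 : EuclideanSpace ℝ (Fin k)) 1)) ≠ ⊤ :=
    ENNReal.mul_ne_top ENNReal.ofReal_ne_top hctop
  have := (ENNReal.mul_le_mul_iff_left hx0 hxtop).mp hineq
  exact_mod_cast this

lemma aux_code (k : ℕ) (hk : 1 ≤ k) (s : Finset (EuclideanSpace ℝ (Fin k)))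
    (h0 : ∀ x ∈ s, x ≠ 0)
    (hsep : ∀ x ∈ s, ∀ y ∈ s, x ≠ y → max ‖x‖ ‖y‖ < ‖x - y‖) :
    s.card ≤ 3 ^ k := by
  classical
  set f : EuclideanSpace ℝ (Fin k) → EuclideanSpace ℝ (Fin k) := fun x => ‖x‖⁻¹ • x with hf
  have hnormf : ∀ x ∈ s, ‖f x‖ = 1 := by
    intro x hx
    have hx0 : ‖x‖ ≠ 0 := norm_ne_zero_iff.mpr (h0 x hx)
    rw [hf]; simp [norm_smul, abs_of_nonneg (inv_nonneg.mpr (norm_nonneg x)),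
      inv_mul_cancel₀ hx0]
  have key : ∀ x ∈ s, ∀ y ∈ s, x ≠ y → 1 < dist (f x) (f y) := by
    intro x hx y hy hxy
    have hx0 : (0:ℝ) < ‖x‖ := norm_pos_iff.mpr (h0 x hx)
    have hy0 : (0:ℝ) < ‖y‖ := norm_pos_iff.mpr (h0 y hy)
    have hsx : ‖x‖ < ‖x - y‖ := lt_of_le_of_lt (le_max_left _ _) (hsep x hx y hy hxy)
    have hsy : ‖y‖ < ‖x - y‖ := lt_of_le_of_lt (le_max_right _ _) (hsep x hx y hy hxy)
    have hexp : ‖x - y‖ ^ 2 = ‖x‖ ^ 2 - 2 * ⟪x, y⟫ + ‖y‖ ^ 2 := norm_sub_sq_real x y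
    have h1 : 2 * ⟪x, y⟫ < ‖x‖ ^ 2 := by nlinarith
    have h2 : 2 * ⟪x, y⟫ < ‖y‖ ^ 2 := by nlinarith
    have hmin : 2 * ⟪x, y⟫ < ‖x‖ * ‖y‖ := by
      rcases le_total ‖x‖ ‖y‖ with h | h
      · nlinarith
      · nlinarith
    have hinner : ⟪f x, f y⟫ < 1/2 := by
      rw [hf]
      simp only [real_inner_smul_left, real_inner_smul_right]
      have hab : 0 < ‖x‖ * ‖y‖ := mul_pos hx0 hy0
      rw [show ‖y‖⁻¹ * (‖x‖⁻¹ * ⟪x, y⟫) = ⟪x, y⟫ / (‖x‖ * ‖y‖) from by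
        rw [div_eq_mul_inv, mul_inv]; ring, div_lt_iff₀ hab]
      nlinarith
    have hd2 : 1 < dist (f x) (f y) ^ 2 := by
      rw [dist_eq_norm, norm_sub_sq_real, hnormf x hx, hnormf y hy]
      nlinarith
    nlinarith [dist_nonneg (x := f x) (y := f y)]
  have hinj : Set.InjOn f s := by
    intro x hx y hy hxy
    by_contra h
    have := key x hx y hy h
    rw [hxy, dist_self] at this
    linarith
  have hcard : (s.image f).card = s.card := Finset.card_image_of_injOn hinj
  rw [← hcard]
  apply aux_pack k hk
  · intro x hx
    obtain ⟨y, hy, rfl⟩ := Finset.mem_image.mp hx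
    exact (hnormf y hy).le
  · intro x hx y hy hxy
    obtain ⟨a, ha, rfl⟩ := Finset.mem_image.mp hx
    obtain ⟨b, hb, rfl⟩ := Finset.mem_image.mp hy
    exact key a ha b hb (fun h => hxy (by rw [h]))

/-- The nearest neighbor distance of `x` in `X`. -/
noncomputable def nnd {M : Type*} [MetricSpace M] (x : M) (X : Set M) : ℝ :=
  sInf (dist x '' (X \ {x}))

/-- The set of nearest neighbor distances of a set `X`. -/
noncomputable def NND {M : Type*} [MetricSpace M] (X : Set M) : Set ℝ :=
  (fun x => nnd x X) '' X

/-- Flat tori have `(3^k + 1)`-bounded geodesic combinatorics: in the flat torus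
`ℝ^k / Λ` (where `Λ` is a lattice, i.e. a discrete subgroup spanning `ℝ^k`, and the
quotient carries the quotient metric), any set of equally spaced points
`{p + i • v̄ : i = 0, …, n}` along a geodesic with at least two elements has at most
`3^k + 1` distinct nearest neighbor distances. -/
theorem flat_torus_bounded_geodesic_combinatorics (k : ℕ) (hk : 1 ≤ k)
    (Λ : AddSubgroup (EuclideanSpace ℝ (Fin k))) [DiscreteTopology Λ]
    (hspan : Submodule.span ℝ (Λ : Set (EuclideanSpace ℝ (Fin k))) = ⊤)
    (v : EuclideanSpace ℝ (Fin k)) (p : EuclideanSpace ℝ (Fin k) ⧸ Λ) (n : ℕ)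
    (X : Set (EuclideanSpace ℝ (Fin k) ⧸ Λ))
    (hX : X = {x | ∃ i : ℕ, i ≤ n ∧
      x = p + (i : ℕ) • (QuotientAddGroup.mk v : EuclideanSpace ℝ (Fin k) ⧸ Λ)})
    (h2 : X.Nontrivial) :
    (NND X).encard ≤ 3 ^ k + 1 := by
  classical
  subst hX
  have hclosed : IsClosed (Λ : Set (EuclideanSpace ℝ (Fin k))) :=
    AddSubgroup.isClosed_of_discrete
  set vb : EuclideanSpace ℝ (Fin k) ⧸ Λ := QuotientAddGroup.mk v with hvb
  set X : Set (EuclideanSpace ℝ (Fin k) ⧸ Λ) :=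
    {x | ∃ i : ℕ, i ≤ n ∧ x = p + i • vb} with hXdef
  set F : ℕ → ℝ := fun m => ‖(m • vb : EuclideanSpace ℝ (Fin k) ⧸ Λ)‖ with hF
  set A : ℕ → Set ℕ := fun t => {m | 1 ≤ m ∧ m ≤ t ∧ m • vb ≠ 0} with hA
  set G : ℕ → ℝ := fun t => sInf (F '' A t) with hG
  set a : ℕ := n - n / 2 with ha
  -- basic finiteness
  have hAfin : ∀ t, (A t).Finite := fun t =>
    (Set.finite_Icc 1 t).subset (fun m hm => Set.mem_Icc.mpr ⟨hm.1, hm.2.1⟩)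
  have hbdd : ∀ t, BddBelow (F '' A t) := fun t => ((hAfin t).image F).bddBelow
  -- the image of distances from the i-th point
  have hmemX : ∀ i : ℕ, i ≤ n → p + i • vb ∈ X := fun i hi => ⟨i, hi, rfl⟩
  have hsubn : ∀ (b c : ℕ), b ≤ c → (c - b) • vb = c • vb - b • vb := by
    intro b c hbc
    rw [sub_nsmul vb hbc, sub_eq_add_neg]
  have himage : ∀ i : ℕ, i ≤ n →
      dist (p + i • vb) '' (X \ {p + i • vb}) = F '' A (max i (n - i)) := by
    intro i hi
    ext r
    simp only [Set.mem_image, Set.mem_diff, Set.mem_singleton_iff]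
    constructor
    · rintro ⟨y, ⟨hyX, hyne⟩, rfl⟩
      obtain ⟨j, hj, rfl⟩ := hyX
      have hji : j • vb ≠ i • vb := fun h => hyne (by rw [h])
      have hjine : j ≠ i := fun h => hji (by rw [h])
      have hdist : dist (p + i • vb) (p + j • vb) = ‖i • vb - j • vb‖ := by
        rw [dist_eq_norm]
        congr 1
        abel
      rcases le_total i j with hij | hij
      · refine ⟨j - i, ⟨by omega, le_trans (by omega) (le_max_right _ _), ?_⟩, ?_⟩
        · rw [hsubn i j hij, sub_ne_zero]
          exact hji
        · rw [hdist, hF]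
          simp only
          rw [hsubn i j hij, ← norm_neg, neg_sub]
      · refine ⟨i - j, ⟨by omega, le_trans (by omega) (le_max_left _ _), ?_⟩, ?_⟩
        · rw [hsubn j i hij, sub_ne_zero]
          exact fun h => hji h.symm
        · rw [hdist, hF]
          simp only
          rw [hsubn j i hij]
    · rintro ⟨m, ⟨hm1, hmmax, hm0⟩, rfl⟩
      rcases le_or_gt m i with hmi | hmi
      · refine ⟨p + (i - m) • vb, ⟨⟨i - m, by omega, rfl⟩, ?_⟩, ?_⟩
        · intro h
          have h2' : (i - m) • vb = i • vb := by
            exact add_left_cancel h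
          apply hm0
          have : (i - (i - m)) • vb = i • vb - (i - m) • vb := hsubn (i - m) i (by omega)
          rw [h2', sub_self] at this
          rwa [show i - (i - m) = m by omega] at this
        · rw [dist_eq_norm, hF]
          simp only
          have : (p + i • vb) - (p + (i - m) • vb) = i • vb - (i - m) • vb := by abel
          rw [this, ← hsubn (i - m) i (by omega), show i - (i - m) = m by omega]
      · have hmni : m ≤ n - i := by
          rcases max_cases i (n - i) with ⟨h1, h2'⟩ | ⟨h1, h2'⟩ <;> omega
        refine ⟨p + (i + m) • vb, ⟨⟨i + m, by omega, rfl⟩, ?_⟩, ?_⟩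
        · intro h
          have h2' : (i + m) • vb = i • vb := add_left_cancel h
          apply hm0
          have : ((i + m) - i) • vb = (i + m) • vb - i • vb := hsubn i (i + m) (by omega)
          rw [h2', sub_self] at this
          rwa [show (i + m) - i = m by omega] at this
        · rw [dist_eq_norm, hF]
          simp only
          have : (p + i • vb) - (p + (i + m) • vb) = -(((i + m) - i) • vb) := by
            rw [hsubn i (i + m) (by omega)]
            abel
          rw [this, norm_neg, show (i + m) - i = m by omega]
  -- nonemptiness
  have hAne' : ∀ i : ℕ, i ≤ n → (A (max i (n - i))).Nonempty := by
    intro i hi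
    obtain ⟨y, hyX, hyne⟩ : ∃ y ∈ X, y ≠ p + i • vb := by
      obtain ⟨x, hx, y, hy, hxy⟩ := h2
      by_cases h : x = p + i • vb
      · exact ⟨y, hy, by rw [← h]; exact fun hh => hxy hh.symm⟩
      · exact ⟨x, hx, h⟩
    have : dist (p + i • vb) y ∈ F '' A (max i (n - i)) := by
      rw [← himage i hi]
      exact ⟨y, ⟨hyX, hyne⟩, rfl⟩
    obtain ⟨m, hm, _⟩ := this
    exact ⟨m, hm⟩
  have hAne : ∀ t : ℕ, a ≤ t → t ≤ n → (A t).Nonempty := by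
    intro t hat htn
    have hmax : max t (n - t) = t := max_eq_left (by omega)
    have := hAne' t htn
    rwa [hmax] at this
  -- nnd formula
  have hnnd : ∀ i : ℕ, i ≤ n → nnd (p + i • vb) X = G (max i (n - i)) := by
    intro i hi
    rw [nnd, himage i hi, hG]
  -- NND is contained in the image of G on [a, n]
  have hNNDsub : NND X ⊆ G '' Set.Icc a n := by
    rintro r ⟨x, hx, rfl⟩
    obtain ⟨i, hi, rfl⟩ := hx
    refine ⟨max i (n - i), ?_, (hnnd i hi).symm⟩
    rcases max_cases i (n - i) with ⟨h1, h2'⟩ | ⟨h1, h2'⟩ <;>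
      (rw [Set.mem_Icc, h1]; omega)
  -- G is antitone on [a, n]
  have hmono : ∀ s t : ℕ, a ≤ s → s ≤ t → t ≤ n → G t ≤ G s := by
    intro s t has hst htn
    apply csInf_le_csInf (hbdd t) ((hAne s has (le_trans hst htn)).image F)
    apply Set.image_mono
    intro m hm
    exact ⟨hm.1, le_trans hm.2.1 hst, hm.2.2⟩
  -- the set of records
  set R : Set ℕ := {r | a + 1 ≤ r ∧ r ≤ n ∧ G r < G (r - 1)} with hR
  have hRfin : R.Finite :=
    (Set.finite_Icc (a + 1) n).subset (fun r hr => Set.mem_Icc.mpr ⟨hr.1, hr.2.1⟩)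
  -- distinct values are either G a or a record value
  have hval : G '' Set.Icc a n ⊆ insert (G a) (G '' R) := by
    rintro c ⟨t, ht, rfl⟩
    rw [Set.mem_Icc] at ht
    set S : Set ℕ := {s | a ≤ s ∧ s ≤ n ∧ G s = G t} with hS
    have hSne : S.Nonempty := ⟨t, ht.1, ht.2, rfl⟩
    set r : ℕ := sInf S with hr
    have hrS : r ∈ S := Nat.sInf_mem hSne
    rcases eq_or_lt_of_le hrS.1 with heq | hlt
    · left
      rw [← hrS.2.2, ← heq]
    · right
      refine ⟨r, ⟨by omega, hrS.2.1, ?_⟩, hrS.2.2⟩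
      have hle : G r ≤ G (r - 1) := hmono (r - 1) r (by omega) (by omega) hrS.2.1
      rcases lt_or_eq_of_le hle with h | h
      · exact h
      · exfalso
        obtain ⟨hra, hrn2, hrG⟩ := hrS
        have : r - 1 ∈ S := ⟨by omega, by omega, by rw [← h, hrG]⟩
        have := Nat.sInf_le this
        omega
  -- record properties
  have hrec : ∀ r ∈ R, r • vb ≠ 0 ∧ F r = G r ∧ ∀ m ∈ A (r - 1), F r < F m := by
    intro r hr
    obtain ⟨hr1, hrn, hrlt⟩ := hr
    have hAr1ne : (A (r - 1)).Nonempty := hAne (r - 1) (by omega) (by omega)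
    have hArne : (A r).Nonempty := by
      obtain ⟨m, hm1, hm2, hm3⟩ := hAr1ne
      exact ⟨m, hm1, by omega, hm3⟩
    have hGr : G r ∈ F '' A r := (hArne.image F).csInf_mem ((hAfin r).image F)
    obtain ⟨m, ⟨hm1', hm2', hm3'⟩, hFm⟩ := hGr
    have hrecs : ∀ m' ∈ A (r - 1), G (r - 1) ≤ F m' := by
      intro m' hm'
      exact csInf_le (hbdd (r - 1)) ⟨m', hm', rfl⟩
    have hmr : m = r := by
      by_contra hne
      have : m ∈ A (r - 1) := ⟨hm1', by omega, hm3'⟩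
      have := hrecs m this
      rw [hFm] at this
      linarith
    subst hmr
    exact ⟨hm3', hFm, fun m' hm' => by
      rw [hFm]
      exact lt_of_lt_of_le hrlt (hrecs m' hm')⟩
  -- choose representatives of minimal norm
  have hwex : ∀ r : ℕ, ∃ u : EuclideanSpace ℝ (Fin k),
      (QuotientAddGroup.mk u : EuclideanSpace ℝ (Fin k) ⧸ Λ) = r • vb ∧ ‖u‖ = F r := by
    intro r
    obtain ⟨l, hlΛ, hldist⟩ :=
      hclosed.exists_infDist_eq_dist ⟨0, Λ.zero_mem⟩ ((r : ℕ) • v)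
    refine ⟨r • v - l, ?_, ?_⟩
    · have h1 : (QuotientAddGroup.mk (r • v - l) : EuclideanSpace ℝ (Fin k) ⧸ Λ)
          = QuotientAddGroup.mk (r • v) - QuotientAddGroup.mk l := rfl
      have h2' : (QuotientAddGroup.mk l : EuclideanSpace ℝ (Fin k) ⧸ Λ) = 0 :=
        (QuotientAddGroup.eq_zero_iff l).mpr hlΛ
      have h3 : (QuotientAddGroup.mk (r • v) : EuclideanSpace ℝ (Fin k) ⧸ Λ) = r • vb := by
        rw [hvb]
        exact QuotientAddGroup.mk_nsmul Λ v r
      rw [h1, h2', h3, sub_zero]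
    · have h3 : (QuotientAddGroup.mk (r • v) : EuclideanSpace ℝ (Fin k) ⧸ Λ) = r • vb := by
        rw [hvb]
        exact QuotientAddGroup.mk_nsmul Λ v r
      have := QuotientAddGroup.norm_mk (S := Λ) (r • v)
      rw [h3] at this
      rw [hF]
      simp only
      rw [this, hldist, dist_eq_norm]
  choose w hwmk hwnorm using hwex
  -- positivity of record values
  have hFpos : ∀ r ∈ R, 0 < F r := by
    intro r hr
    obtain ⟨hne, _, _⟩ := hrec r hr
    rw [hF]
    simp only
    exact norm_pos_iff.mpr hne
  -- pairwise separation
  have hpair : ∀ r1 ∈ R, ∀ r2 ∈ R, r1 < r2 → max ‖w r1‖ ‖w r2‖ < ‖w r1 - w r2‖ := by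
    intro r1 hr1 r2 hr2 h12
    obtain ⟨hne1, hFG1, hrec1⟩ := hrec r1 hr1
    obtain ⟨hne2, hFG2, hrec2⟩ := hrec r2 hr2
    obtain ⟨ha1, hn1, _⟩ := hr1
    obtain ⟨ha2, hn2, _⟩ := hr2
    set d : ℕ := r2 - r1 with hd
    have hd1 : 1 ≤ d := by omega
    have hdle : d ≤ r1 - 1 := by omega
    -- F r2 < F r1
    have hF21 : F r2 < F r1 := hrec2 r1 ⟨by omega, by omega, hne1⟩
    -- d • vb ≠ 0
    have hd0 : d • vb ≠ 0 := by
      intro h0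
      set m : ℕ := r1 - d with hm
      have hm1 : 1 ≤ m := by omega
      have hmvb : m • vb = r1 • vb := by
        have : (r1 - m) • vb = r1 • vb - m • vb := hsubn m r1 (by omega)
        rw [show r1 - m = d by omega, h0] at this
        rw [eq_comm, ← sub_eq_zero]
        exact this.symm
      have hmA : m ∈ A (r1 - 1) := ⟨hm1, by omega, by rw [hmvb]; exact hne1⟩
      have := hrec1 m hmA
      rw [hF] at this
      simp only at this
      rw [hmvb] at this
      exact lt_irrefl _ this
    -- the quotient norm bound
    have hkey : F r1 < ‖w r1 - w r2‖ := by
      have hdA : d ∈ A (r1 - 1) := ⟨hd1, hdle, hd0⟩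
      have h1 : F r1 < F d := hrec1 d hdA
      have hmk : (QuotientAddGroup.mk (w r2 - w r1) : EuclideanSpace ℝ (Fin k) ⧸ Λ)
          = d • vb := by
        have : (QuotientAddGroup.mk (w r2 - w r1) : EuclideanSpace ℝ (Fin k) ⧸ Λ)
            = QuotientAddGroup.mk (w r2) - QuotientAddGroup.mk (w r1) := rfl
        rw [this, hwmk r1, hwmk r2, ← hsubn r1 r2 (by omega)]
      have h2' : F d ≤ ‖w r2 - w r1‖ := by
        calc F d = ‖(QuotientAddGroup.mk (w r2 - w r1) : EuclideanSpace ℝ (Fin k) ⧸ Λ)‖ := by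
              rw [hmk]
          _ ≤ ‖w r2 - w r1‖ := QuotientAddGroup.norm_mk_le_norm
      rw [← norm_neg (w r1 - w r2), neg_sub]
      linarith
    rw [hwnorm r1, hwnorm r2]
    rw [max_eq_left hF21.le]
    exact hkey
  -- injectivity and packing
  have hinj : Set.InjOn w R := by
    intro r1 hr1 r2 hr2 heq
    by_contra hne
    rcases lt_or_gt_of_ne hne with h | h
    · have h' := hpair r1 hr1 r2 hr2 h
      rw [heq, sub_self, norm_zero] at h'
      have h1 := le_max_left ‖w r2‖ ‖w r2‖
      have h2' := norm_nonneg (w r2)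
      linarith
    · have h' := hpair r2 hr2 r1 hr1 h
      rw [heq, sub_self, norm_zero] at h'
      have h1 := le_max_left ‖w r2‖ ‖w r2‖
      have h2' := norm_nonneg (w r2)
      linarith
  have hcardR : hRfin.toFinset.card ≤ 3 ^ k := by
    have hinj' : Set.InjOn w hRfin.toFinset := by
      intro x hx y hy
      exact hinj (hRfin.mem_toFinset.mp hx) (hRfin.mem_toFinset.mp hy)
    rw [← Finset.card_image_of_injOn hinj']
    apply aux_code k hk
    · intro x hx
      obtain ⟨r, hr, rfl⟩ := Finset.mem_image.mp hx
      have hrR := hRfin.mem_toFinset.mp hr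
      intro h0
      have := hFpos r hrR
      rw [← hwnorm r, h0, norm_zero] at this
      linarith
    · intro x hx y hy hxy
      obtain ⟨r1, hr1, rfl⟩ := Finset.mem_image.mp hx
      obtain ⟨r2, hr2, rfl⟩ := Finset.mem_image.mp hy
      have hr1R := hRfin.mem_toFinset.mp hr1
      have hr2R := hRfin.mem_toFinset.mp hr2
      have hne : r1 ≠ r2 := fun h => hxy (by rw [h])
      rcases lt_or_gt_of_ne hne with h | h
      · exact hpair r1 hr1R r2 hr2R h
      · have := hpair r2 hr2R r1 hr1R h
        rw [← norm_neg (w r2 - w r1), neg_sub] at this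
        rw [max_comm] at this
        exact this
  -- putting it all together
  calc (NND X).encard ≤ (insert (G a) (G '' R)).encard :=
        Set.encard_le_encard (le_trans hNNDsub hval)
    _ ≤ (G '' R).encard + 1 := Set.encard_insert_le _ _
    _ ≤ R.encard + 1 := by
        exact add_le_add_left (Set.encard_image_le G R) 1
    _ ≤ (3 : ℕ∞) ^ k + 1 := by
        apply add_le_add_left
        rw [hRfin.encard_eq_coe_toFinset_card]
        exact_mod_cast hcardR
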